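/- The quantities c₁ = √((λ−μ−ψ)² + 4λψ) and c₁·c₂ = −(λ−μ−ψ) are functions of d := λ−μ−ψ and f := λψ only; consequently q(x) (defined via c₁ and c₂) depends on (λ, μ, ψ) only through d and f. In particular, if λ−μ−ψ = λ'−μ'−ψ' and λψ = λ'ψ', then q(x) computed from (λ,μ,ψ) equals q(x) computed from (λ',μ',ψ') for all x. -/
import Mathlib


noncomputable def c1 (lam mu psi : ℝ) : ℝ := Real.sqrt ((lam - mu - psi)^2 + 4*lam*psi)

noncomputable def c2 (lam mu psi : ℝ) : ℝ := -(lam - mu - psi) / c1 lam mu psi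

noncomputable def q (lam mu psi : ℝ) (x : ℝ) : ℝ :=
  4 / (2*(1 - (c2 lam mu psi)^2) + Real.exp (-(c1 lam mu psi)*x) * (1 - c2 lam mu psi)^2
    + Real.exp ((c1 lam mu psi)*x) * (1 + c2 lam mu psi)^2)

theorem stmt5 (lam mu psi lam' mu' psi' : ℝ)
    (hlam : 0 < lam) (hmu : 0 < mu) (hpsi : 0 < psi)
    (hlam' : 0 < lam') (hmu' : 0 < mu') (hpsi' : 0 < psi')
    (hd : lam - mu - psi = lam' - mu' - psi')
    (hf : lam * psi = lam' * psi') :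
    c1 lam mu psi = c1 lam' mu' psi' ∧
    c1 lam mu psi * c2 lam mu psi = -(lam - mu - psi) ∧
    ∀ x : ℝ, q lam mu psi x = q lam' mu' psi' x := by
  have hc1 : c1 lam mu psi = c1 lam' mu' psi' := by
    unfold c1
    rw [hd]
    congr 1
    linarith
  have hpos : 0 < c1 lam mu psi := by
    unfold c1
    apply Real.sqrt_pos.mpr
    have : 0 < 4 * lam * psi := by positivity
    nlinarith [sq_nonneg (lam - mu - psi)]
  have hc2 : c2 lam mu psi = c2 lam' mu' psi' := by
    unfold c2
    rw [hc1, hd]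
  refine ⟨hc1, ?_, ?_⟩
  · unfold c2
    field_simp
  · intro x
    unfold q
    rw [hc1, hc2]
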